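/- Let V be a real Hilbert space and let F ⊆ V be a compact subset. Let (f_n)_{n≥1} be a sequence in F generated by the (strong) greedy algorithm: writing P_n for the orthogonal projection of V onto span{f_1, …, f_n} (with P_0 = 0) and σ_n(F) := sup_{f∈F} ‖f − P_n f‖, assume that for every n ≥ 0 the next element satisfies ‖f_{n+1} − P_n f_{n+1}‖ = σ_n(F). Then for every N ≥ 1, σ_N(F) ≤ (2^{N+1}/√3) · d_N(F). -/

import Mathlib

open scoped RealInnerProductSpace


variable {V : Type*} [NormedAddCommGroup V] [InnerProductSpace ℝ V] [CompleteSpace V]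

/-- The Kolmogorov `N`-width of a subset `F` of a real Hilbert space:
the infimum, over all linear subspaces `W` with `dim W ≤ N`, of `sup_{f ∈ F} inf_{w ∈ W} ‖f - w‖`. -/
noncomputable def kolmogorovWidth (F : Set V) (N : ℕ) : ℝ :=
  sInf {r : ℝ | ∃ W : Submodule ℝ V, Module.rank ℝ W ≤ N ∧
    ∀ f ∈ F, Metric.infDist f (W : Set V) ≤ r}

/-- The space spanned by the greedy snapshots `f_1, …, f_n` (for `n = 0` this is `⊥`). -/
noncomputable def greedySpace (f : ℕ → V) (n : ℕ) : Submodule ℝ V :=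
  Submodule.span ℝ (f '' Set.Icc 1 n)

instance (f : ℕ → V) (n : ℕ) : FiniteDimensional ℝ (greedySpace f n) :=
  FiniteDimensional.span_of_finite ℝ ((Set.finite_Icc 1 n).image f)

/-- The greedy approximation error `σ_n(F) = sup_{f ∈ F} ‖f - P_n f‖`, where `P_n` is the
orthogonal projection onto the span of the first `n` greedy snapshots (`P_0 = 0`). -/
noncomputable def greedyError (F : Set V) (f : ℕ → V) (n : ℕ) : ℝ :=
  ⨆ g : F, ‖(g : V) - ((greedySpace f n).orthogonalProjectionOnto (g : V) : V)‖

set_option linter.unusedSectionVars false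

lemma greedySpace_mono (f : ℕ → V) {m n : ℕ} (h : m ≤ n) :
    greedySpace f m ≤ greedySpace f n :=
  Submodule.span_mono (Set.image_mono (Set.Icc_subset_Icc_right h))

lemma mem_greedySpace {f : ℕ → V} {i n : ℕ} (h1 : 1 ≤ i) (h2 : i ≤ n) :
    f i ∈ greedySpace f n :=
  Submodule.subset_span ⟨i, ⟨h1, h2⟩, rfl⟩

lemma norm_sub_orthProj_le (K : Submodule ℝ V) [FiniteDimensional ℝ K] (g : V) {w : V}
    (hw : w ∈ K) : ‖g - Submodule.orthogonalProjectionOnto K g‖ ≤ ‖g - w‖ := by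
  rw [← Submodule.starProjection_apply, Submodule.starProjection_minimal]
  exact ciInf_le ⟨0, by rintro x ⟨y, rfl⟩; positivity⟩ (⟨w, hw⟩ : K)

lemma norm_sub_proj_le_greedyError {F : Set V} (hF : IsCompact F) {f : ℕ → V} {g : V}
    (hg : g ∈ F) (n : ℕ) :
    ‖g - (Submodule.orthogonalProjectionOnto (greedySpace f n) g : V)‖ ≤ greedyError F f n := by
  obtain ⟨Cb, hCb⟩ := hF.isBounded.exists_norm_le
  refine le_ciSup_of_le ⟨Cb, ?_⟩ (⟨g, hg⟩ : F) le_rfl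
  rintro x ⟨y, rfl⟩
  calc ‖(y : V) - (Submodule.orthogonalProjectionOnto (greedySpace f n) (y : V) : V)‖
      ≤ ‖(y : V) - 0‖ := norm_sub_orthProj_le _ _ (zero_mem _)
    _ = ‖(y : V)‖ := by rw [sub_zero]
    _ ≤ Cb := hCb _ y.2

lemma greedyError_antitone {F : Set V} (hF : IsCompact F) (hne : F.Nonempty) {f : ℕ → V}
    {m n : ℕ} (h : m ≤ n) : greedyError F f n ≤ greedyError F f m := by
  haveI : Nonempty F := hne.to_subtype
  refine ciSup_le fun g => ?_
  calc ‖(g : V) - (Submodule.orthogonalProjectionOnto (greedySpace f n) (g : V) : V)‖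
      ≤ ‖(g : V) - (Submodule.orthogonalProjectionOnto (greedySpace f m) (g : V) : V)‖ :=
        norm_sub_orthProj_le _ _ (greedySpace_mono f h (SetLike.coe_mem _))
    _ ≤ greedyError F f m := norm_sub_proj_le_greedyError hF g.2 m

set_option synthInstance.maxHeartbeats 1000000 in
lemma finiteDimensional_of_rank_le {W : Submodule ℝ V} {n : ℕ}
    (h : Module.rank ℝ W ≤ (n : Cardinal)) : FiniteDimensional ℝ W :=
  Module.rank_lt_aleph0_iff.mp (h.trans_lt (Cardinal.nat_lt_aleph0 n))

lemma greedyError_nonneg {F : Set V} (hF : IsCompact F) (hne : F.Nonempty) (f : ℕ → V) (n : ℕ) :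
    0 ≤ greedyError F f n := by
  obtain ⟨g, hg⟩ := hne
  exact (norm_nonneg _).trans (norm_sub_proj_le_greedyError hF hg n)

/-- **Greedy versus Kolmogorov widths** (Binev–Cohen–Dahmen–DeVore–Petrova–Wojtaszczyk):
for a compact set `F` in a Hilbert space and a strong greedy sequence `(f_n)_{n ≥ 1}` in `F`,
`σ_N(F) ≤ (2^{N+1}/√3) d_N(F)` for every `N ≥ 1`. -/
theorem greedyError_le_kolmogorovWidth
    (F : Set V) (hF : IsCompact F) (f : ℕ → V)
    (hmem : ∀ n : ℕ, 1 ≤ n → f n ∈ F)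
    (hgreedy : ∀ n : ℕ,
      ‖f (n + 1) - ((greedySpace f n).orthogonalProjectionOnto (f (n + 1)) : V)‖ =
        greedyError F f n)
    (N : ℕ) (hN : 1 ≤ N) :
    greedyError F f N ≤ (2 ^ (N + 1) / Real.sqrt 3) * kolmogorovWidth F N := by
  classical
  have hFne : F.Nonempty := ⟨f 1, hmem 1 le_rfl⟩
  haveI : Nonempty F := hFne.to_subtype
  set σ : ℕ → ℝ := greedyError F f with hσdef
  set d : ℝ := kolmogorovWidth F N with hddef
  set S : Set ℝ := {r : ℝ | ∃ W : Submodule ℝ V, Module.rank ℝ W ≤ N ∧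
    ∀ g ∈ F, Metric.infDist g (W : Set V) ≤ r} with hSdef
  have hdS : d = sInf S := rfl
  have hSne : S.Nonempty := by
    obtain ⟨Cb, hCb⟩ := hF.isBounded.exists_norm_le
    refine ⟨Cb, ⊥, by simp, fun g hg => ?_⟩
    have h1 : Metric.infDist g ((⊥ : Submodule ℝ V) : Set V) ≤ dist g 0 :=
      Metric.infDist_le_dist_of_mem (by simp)
    rw [dist_eq_norm, sub_zero] at h1
    exact h1.trans (hCb g hg)
  have hd0 : 0 ≤ d := by
    rw [hdS]
    refine Real.sInf_nonneg fun r hr => ?_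
    obtain ⟨W, -, hW⟩ := hr
    exact Metric.infDist_nonneg.trans (hW (f 1) (hmem 1 le_rfl))
  set K : ℝ := 2 ^ (N + 1) / Real.sqrt 3 with hKdef
  have hK0 : 0 < K := by
    apply div_pos (by positivity) (Real.sqrt_pos.mpr (by norm_num))
  -- reduce to the `ε`-perturbed statement
  have main : ∀ ε : ℝ, 0 < ε → σ N ≤ K * d + K * ε := by
    intro ε hε
    by_cases hσN : σ N ≤ 0
    · have : 0 ≤ K * d + K * ε := by positivity
      linarith
    push_neg at hσN
    set D : ℝ := d + ε with hDdef
    have hD0 : 0 < D := by positivity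
    obtain ⟨r, hrS, hrlt⟩ := Real.lt_sInf_add_pos hSne (half_pos hε)
    obtain ⟨W, hWrank, hWdist⟩ := hrS
    have hrD : r < D := by rw [← hdS] at hrlt; rw [hDdef]; linarith
    haveI hWfin : FiniteDimensional ℝ W := finiteDimensional_of_rank_le hWrank
    have hWfr : Module.finrank ℝ W ≤ N := Module.finrank_le_of_rank_le hWrank
    have hw : ∀ i : ℕ, 1 ≤ i → ∃ w ∈ W, ‖f i - w‖ ≤ D := by
      intro i hi
      have h1 : Metric.infDist (f i) (W : Set V) < D := (hWdist _ (hmem i hi)).trans_lt hrD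
      obtain ⟨w, hwW, hwd⟩ := (Metric.infDist_lt_iff ⟨0, W.zero_mem⟩).mp h1
      exact ⟨w, hwW, by rw [← dist_eq_norm]; exact hwd.le⟩
    have hσmono : ∀ j, j ≤ N → σ N ≤ σ j := fun j hj => greedyError_antitone hF hFne hj
    have hσpos : ∀ j, j ≤ N → 0 < σ j := fun j hj => hσN.trans_le (hσmono j hj)
    -- the orthonormal residual system
    set e : ℕ → V := fun j =>
      f (j + 1) - (Submodule.orthogonalProjectionOnto (greedySpace f j) (f (j + 1)) : V) with hedef
    have henorm : ∀ j, ‖e j‖ = σ j := hgreedy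
    have heo : ∀ j, e j ∈ (greedySpace f j)ᗮ := fun j =>
      Submodule.sub_starProjection_mem_orthogonal _
    have hemem : ∀ j, e j ∈ greedySpace f (j + 1) := fun j =>
      Submodule.sub_mem _ (mem_greedySpace (Nat.le_add_left 1 j) le_rfl)
        (greedySpace_mono f (Nat.le_succ j) (SetLike.coe_mem _))
    set b : ℕ → V := fun j => (σ j)⁻¹ • e j with hbdef
    have hbo : ∀ j, b j ∈ (greedySpace f j)ᗮ := fun j => Submodule.smul_mem _ _ (heo j)
    have hbmem : ∀ j, b j ∈ greedySpace f (j + 1) := fun j => Submodule.smul_mem _ _ (hemem j)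
    have hbnorm : ∀ j, j ≤ N → ‖b j‖ = 1 := by
      intro j hj
      rw [hbdef]
      simp only [norm_smul, Real.norm_eq_abs, henorm j,
        abs_of_pos (inv_pos.mpr (hσpos j hj))]
      exact inv_mul_cancel₀ (hσpos j hj).ne'
    have hee : ∀ i j : ℕ, j < i → ⟪e j, e i⟫ = 0 := by
      intro i j hji
      exact (Submodule.mem_orthogonal _ _).mp (heo i) _
        (greedySpace_mono f hji (hemem j))
    set v : Fin (N + 1) → V := fun j => b j with hvdef
    have hortho : Orthonormal ℝ v := by
      rw [orthonormal_iff_ite]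
      intro i j
      by_cases hij : i = j
      · subst hij
        rw [if_pos rfl]
        show ⟪b (i : ℕ), b (i : ℕ)⟫ = 1
        rw [real_inner_self_eq_norm_sq, hbnorm i.1 (Nat.lt_succ_iff.mp i.isLt)]
        norm_num
      · rw [if_neg hij]
        have hne : (i : ℕ) ≠ (j : ℕ) := fun h => hij (Fin.ext h)
        simp only [hvdef, hbdef, real_inner_smul_left, real_inner_smul_right]
        rcases hne.lt_or_gt with h | h
        · rw [hee j i h]; ring
        · rw [real_inner_comm, hee i j h]; ring
    set U : Submodule ℝ V := Submodule.span ℝ (Set.range v) with hUdef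
    haveI : FiniteDimensional ℝ U := FiniteDimensional.span_of_finite ℝ (Set.finite_range v)
    have hUfr : Module.finrank ℝ U = N + 1 := by
      rw [hUdef, finrank_span_eq_card hortho.linearIndependent, Fintype.card_fin]
    set W' : Submodule ℝ V :=
      W.map (U.subtype ∘ₗ (Submodule.orthogonalProjectionOnto U).toLinearMap) with hW'def
    haveI : FiniteDimensional ℝ W' := Module.Finite.map _ _
    have hW'fr : Module.finrank ℝ W' ≤ N :=
      (Submodule.finrank_map_le _ W).trans hWfr
    -- a unit vector in `U` orthogonal to `W'`
    obtain ⟨x, hxU, hxW', hx0⟩ : ∃ x : V, x ∈ U ∧ x ∈ W'ᗮ ∧ x ≠ 0 := by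
      by_contra h
      push_neg at h
      set φ : U →ₗ[ℝ] W' := (Submodule.orthogonalProjectionOnto W').toLinearMap ∘ₗ U.subtype with hφdef
      have hinj : Function.Injective φ := by
        rw [← LinearMap.ker_eq_bot]
        ext x
        simp only [LinearMap.mem_ker, Submodule.mem_bot]
        constructor
        · intro hx
          have hx' : (x : V) ∈ W'ᗮ := by
            rw [← Submodule.orthogonalProjectionOnto_eq_zero_iff]
            exact hx
          have := h (x : V) x.2 hx'
          exact Subtype.ext this
        · rintro rfl; simp [hφdef]
      have := LinearMap.finrank_le_finrank_of_injective hinj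
      omega
    set u : V := ‖x‖⁻¹ • x with hudef
    have hu1 : ‖u‖ = 1 := by
      rw [hudef, norm_smul, norm_inv, norm_norm,
        inv_mul_cancel₀ (norm_ne_zero_iff.mpr hx0)]
    have huU : u ∈ U := Submodule.smul_mem _ _ hxU
    have huW' : u ∈ W'ᗮ := Submodule.smul_mem _ _ hxW'
    -- coordinates of `u`
    obtain ⟨c, hc⟩ := (Submodule.mem_span_range_iff_exists_fun _).mp huU
    set C : ℕ → ℝ := fun j => if h : j < N + 1 then c ⟨j, h⟩ else 0 with hCdef
    have hCv : ∀ j : Fin (N + 1), C (j : ℕ) = c j := by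
      intro j
      rw [hCdef]
      simp only [dif_pos j.isLt, Fin.eta]
    have hsum : ∑ j ∈ Finset.range (N + 1), C j • b j = u := by
      rw [← Fin.sum_univ_eq_sum_range (fun j => C j • b j) (N + 1), ← hc]
      exact Finset.sum_congr rfl fun j _ => by rw [hCv j]
    have hCsq : ∑ j ∈ Finset.range (N + 1), (C j) ^ 2 = 1 := by
      have h1 : ⟪u, u⟫ = 1 := by
        rw [real_inner_self_eq_norm_sq, hu1]; norm_num
      calc ∑ j ∈ Finset.range (N + 1), (C j) ^ 2
          = ∑ j : Fin (N + 1), (c j) ^ 2 := by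
            rw [← Fin.sum_univ_eq_sum_range (fun j => (C j) ^ 2) (N + 1)]
            exact Finset.sum_congr rfl fun j _ => by rw [hCv j]
        _ = ⟪u, u⟫ := by
            conv_rhs => rw [← hc]
            rw [sum_inner]
            refine Finset.sum_congr rfl fun j _ => ?_
            rw [real_inner_smul_left, hortho.inner_right_fintype c j]; ring
        _ = 1 := h1
    -- inner products of snapshots with the residual directions
    have hfb_diag : ∀ i, i ≤ N → ⟪f (i + 1), b i⟫ = σ i := by
      intro i hi
      have h2 : ⟪(Submodule.orthogonalProjectionOnto (greedySpace f i) (f (i + 1)) : V), e i⟫ = 0 :=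
        (Submodule.mem_orthogonal _ _).mp (heo i) _ (SetLike.coe_mem _)
      have h1 : ⟪f (i + 1), e i⟫ = σ i ^ 2 := by
        have hsplit : f (i + 1) = e i +
            (Submodule.orthogonalProjectionOnto (greedySpace f i) (f (i + 1)) : V) := by
          exact (sub_add_cancel _ _).symm
        rw [hsplit, inner_add_left, h2, add_zero, real_inner_self_eq_norm_sq, henorm i]
      rw [hbdef]
      simp only [real_inner_smul_right, h1]
      have := hσpos i hi
      field_simp
    have hfb_lt : ∀ i, i ≤ N → ∀ j, j < i → |⟪f (i + 1), b j⟫| ≤ σ j := by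
      intro i hi j hji
      have h2 : ⟪(Submodule.orthogonalProjectionOnto (greedySpace f j) (f (i + 1)) : V), b j⟫ = 0 :=
        (Submodule.mem_orthogonal _ _).mp (hbo j) _ (SetLike.coe_mem _)
      have h1 : ⟪f (i + 1), b j⟫ =
          ⟪f (i + 1) - (Submodule.orthogonalProjectionOnto (greedySpace f j) (f (i + 1)) : V), b j⟫ := by
        rw [inner_sub_left, h2, sub_zero]
      rw [h1]
      calc |⟪f (i + 1) - (Submodule.orthogonalProjectionOnto (greedySpace f j) (f (i + 1)) : V), b j⟫|
          ≤ ‖f (i + 1) - (Submodule.orthogonalProjectionOnto (greedySpace f j) (f (i + 1)) : V)‖ * ‖b j‖ :=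
            abs_real_inner_le_norm _ _
        _ ≤ σ j * 1 := by
            apply mul_le_mul
            · exact norm_sub_proj_le_greedyError hF (hmem (i + 1) (Nat.le_add_left 1 i)) j
            · exact (hbnorm j (hji.le.trans hi)).le
            · exact norm_nonneg _
            · exact (hσpos j (hji.le.trans hi)).le
        _ = σ j := mul_one _
    have hfb_gt : ∀ i j, j ≤ N → i < j → ⟪f (i + 1), b j⟫ = 0 := by
      intro i j _ hij
      exact (Submodule.mem_orthogonal _ _).mp (hbo j) _
        (mem_greedySpace (Nat.le_add_left 1 i) hij)
    -- expansion of inner products with `u`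
    have hfu : ∀ i, i ≤ N →
        ⟪f (i + 1), u⟫ = ∑ j ∈ Finset.range (i + 1), C j * ⟪f (i + 1), b j⟫ := by
      intro i hi
      rw [← hsum, inner_sum]
      simp only [real_inner_smul_right]
      refine (Finset.sum_subset (Finset.range_subset_range.mpr (by omega)) ?_).symm
      intro j hj hj'
      rw [Finset.mem_range] at hj hj'
      rw [hfb_gt i j (by omega) (by omega), mul_zero]
    -- the inner products with `u` are small
    have hfuD : ∀ i, i ≤ N → |⟪f (i + 1), u⟫| ≤ D := by
      intro i hi
      obtain ⟨w, hwW, hwd⟩ := hw (i + 1) (Nat.le_add_left 1 i)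
      have hwu : ⟪w, u⟫ = 0 := by
        have h1 : ⟪w - (Submodule.orthogonalProjectionOnto U w : V), u⟫ = 0 := by
          rw [real_inner_comm]
          exact (Submodule.mem_orthogonal _ _).mp
            (Submodule.sub_starProjection_mem_orthogonal (K := U) w) _ huU
        have h2 : ⟪(Submodule.orthogonalProjectionOnto U w : V), u⟫ = 0 :=
          (Submodule.mem_orthogonal _ _).mp huW' _ ⟨w, hwW, rfl⟩
        calc ⟪w, u⟫ = ⟪w - (Submodule.orthogonalProjectionOnto U w : V) +
              (Submodule.orthogonalProjectionOnto U w : V), u⟫ := by rw [sub_add_cancel]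
          _ = 0 := by rw [inner_add_left, h1, h2, add_zero]
      calc |⟪f (i + 1), u⟫| = |⟪f (i + 1) - w, u⟫| := by
            rw [inner_sub_left, hwu, sub_zero]
        _ ≤ ‖f (i + 1) - w‖ * ‖u‖ := abs_real_inner_le_norm _ _
        _ ≤ D := by rw [hu1, mul_one]; exact hwd
    -- the recursive bound
    have hrec : ∀ i, i ≤ N → σ i * |C i| ≤ 2 ^ i * D := by
      intro i
      induction i using Nat.strong_induction_on with
      | _ i ih =>
        intro hi
        have h1 : C i * ⟪f (i + 1), b i⟫ =
            ⟪f (i + 1), u⟫ - ∑ j ∈ Finset.range i, C j * ⟪f (i + 1), b j⟫ := by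
          rw [hfu i hi, Finset.sum_range_succ]; ring
        have h2 : σ i * |C i| = |C i * ⟪f (i + 1), b i⟫| := by
          rw [abs_mul, hfb_diag i hi, abs_of_nonneg (hσpos i hi).le]; ring
        rw [h2, h1]
        calc |⟪f (i + 1), u⟫ - ∑ j ∈ Finset.range i, C j * ⟪f (i + 1), b j⟫|
            ≤ |⟪f (i + 1), u⟫| + |∑ j ∈ Finset.range i, C j * ⟪f (i + 1), b j⟫| :=
              abs_sub _ _
          _ ≤ D + ∑ j ∈ Finset.range i, 2 ^ j * D := by
              gcongr
              · exact hfuD i hi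
              · calc |∑ j ∈ Finset.range i, C j * ⟪f (i + 1), b j⟫|
                    ≤ ∑ j ∈ Finset.range i, |C j * ⟪f (i + 1), b j⟫| :=
                      Finset.abs_sum_le_sum_abs _ _
                  _ ≤ ∑ j ∈ Finset.range i, 2 ^ j * D := by
                      refine Finset.sum_le_sum fun j hj => ?_
                      rw [Finset.mem_range] at hj
                      have hjN : j ≤ N := hj.le.trans hi
                      calc |C j * ⟪f (i + 1), b j⟫| = |C j| * |⟪f (i + 1), b j⟫| := abs_mul _ _
                        _ ≤ |C j| * σ j := by
                            gcongr
                            exact hfb_lt i hi j hj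
                        _ = σ j * |C j| := mul_comm _ _
                        _ ≤ 2 ^ j * D := ih j hj hjN
          _ = (1 + ∑ j ∈ Finset.range i, (2 : ℝ) ^ j) * D := by
              rw [add_mul, one_mul, Finset.sum_mul]
          _ = 2 ^ i * D := by
              rw [geom_sum_eq (by norm_num : (2 : ℝ) ≠ 1)]
              ring
    -- summing up
    have hsq : σ N ^ 2 ≤ (K * D) ^ 2 := by
      have h3 : ∀ j, j ≤ N → σ N * |C j| ≤ 2 ^ j * D := fun j hj =>
        (mul_le_mul_of_nonneg_right (hσmono j hj) (abs_nonneg _)).trans (hrec j hj)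
      have h4 : σ N ^ 2 ≤ ∑ j ∈ Finset.range (N + 1), (2 ^ j * D) ^ 2 := by
        calc σ N ^ 2 = σ N ^ 2 * ∑ j ∈ Finset.range (N + 1), (C j) ^ 2 := by
              rw [hCsq, mul_one]
          _ = ∑ j ∈ Finset.range (N + 1), (σ N * |C j|) ^ 2 := by
              rw [Finset.mul_sum]
              exact Finset.sum_congr rfl fun j _ => by rw [mul_pow, sq_abs]
          _ ≤ ∑ j ∈ Finset.range (N + 1), (2 ^ j * D) ^ 2 := by
              refine Finset.sum_le_sum fun j hj => ?_
              rw [Finset.mem_range] at hj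
              have := h3 j (by omega)
              have h5 : 0 ≤ σ N * |C j| := by positivity
              exact pow_le_pow_left₀ h5 this 2
      have h6 : ∑ j ∈ Finset.range (N + 1), ((2 : ℝ) ^ j * D) ^ 2
          = ((4 : ℝ) ^ (N + 1) - 1) / 3 * D ^ 2 := by
        have : ∀ j, ((2 : ℝ) ^ j * D) ^ 2 = (4 : ℝ) ^ j * D ^ 2 := by
          intro j
          rw [mul_pow, ← pow_mul, mul_comm j 2, pow_mul]
          norm_num
        simp only [this]
        rw [← Finset.sum_mul, geom_sum_eq (by norm_num : (4 : ℝ) ≠ 1)]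
        norm_num
      have h7 : (K * D) ^ 2 = (4 : ℝ) ^ (N + 1) / 3 * D ^ 2 := by
        rw [hKdef, mul_pow, div_pow, Real.sq_sqrt (by norm_num : (0 : ℝ) ≤ 3),
          ← pow_mul, mul_comm (N + 1) 2, pow_mul]
        norm_num
      calc σ N ^ 2 ≤ ∑ j ∈ Finset.range (N + 1), (2 ^ j * D) ^ 2 := h4
        _ = ((4 : ℝ) ^ (N + 1) - 1) / 3 * D ^ 2 := h6
        _ ≤ (4 : ℝ) ^ (N + 1) / 3 * D ^ 2 := by
            gcongr
            linarith [pow_pos (by norm_num : (0:ℝ) < 4) (N + 1)]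
        _ = (K * D) ^ 2 := h7.symm
    have hfinal : σ N ≤ K * D := by
      have h8 : 0 ≤ K * D := by positivity
      calc σ N = Real.sqrt (σ N ^ 2) := (Real.sqrt_sq hσN.le).symm
        _ ≤ Real.sqrt ((K * D) ^ 2) := Real.sqrt_le_sqrt hsq
        _ = K * D := Real.sqrt_sq h8
    rw [hDdef] at hfinal
    linarith [hfinal]
  refine le_of_forall_pos_le_add fun δ hδ => ?_
  have := main (δ / K) (div_pos hδ hK0)
  rw [mul_div_cancel₀ _ hK0.ne'] at this
  exact this
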